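/- Let ω ∈ ℝ be irrational and let f : S¹ × [-2,2] → [-2,2] be continuous with x ↦ f(θ,x) non-increasing for every θ, f(θ,-2) = 2 and f(θ,2) = -2 for every θ; set T(θ,x) = (θ + ω, f(θ,x)). Suppose A ⊆ S¹ × [-1,1] is a compact set with π(A) = S¹, every fiber A_θ = {x : (θ,x) ∈ A} is connected, T(A) = A, and A contains no arc of a curve (no nonempty open arc U ⊆ S¹ and continuous ξ : U → [-2,2] has its graph contained in A). Then T has no invariant curve: there is no continuous φ : S¹ → [-2,2] with f(θ, φ(θ)) = φ(θ + ω) for all θ ∈ S¹. -/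

import Mathlib

open Set

/-- The graph of `φ` over `G`. -/
def graphOn (G : Set UnitAddCircle) (φ : UnitAddCircle → ℝ) : Set (UnitAddCircle × ℝ) :=
  (fun θ => (θ, φ θ)) '' G

/-- The quasiperiodic skew product `T(θ,x) = (θ + ω, f θ x)`. -/
noncomputable def skewProd (ω : ℝ) (f : UnitAddCircle → ℝ → ℝ) :
    UnitAddCircle × ℝ → UnitAddCircle × ℝ :=
  fun p => (p.1 + (ω : UnitAddCircle), f p.1 p.2)

private lemma denseOrbit (ω : ℝ) (hω : Irrational ω) (θ₀ : UnitAddCircle) :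
    Dense (range fun n : ℤ => θ₀ + n • (ω : UnitAddCircle)) := by
  have hS : Dense ((AddSubgroup.closure {1, ω} : AddSubgroup ℝ) : Set ℝ) := by
    rcases AddSubgroup.dense_or_cyclic (AddSubgroup.closure {1, ω}) with h | ⟨a, ha⟩
    · exact h
    · exfalso
      have h1 : (1:ℝ) ∈ AddSubgroup.closure ({1, ω} : Set ℝ) :=
        AddSubgroup.subset_closure (by simp)
      have hw : ω ∈ AddSubgroup.closure ({1, ω} : Set ℝ) :=
        AddSubgroup.subset_closure (by simp)
      rw [ha, AddSubgroup.mem_closure_singleton] at h1 hw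
      obtain ⟨n, hn⟩ := h1
      obtain ⟨m, hm⟩ := hw
      rw [zsmul_eq_mul] at hn hm
      have hn0 : (n:ℝ) ≠ 0 := by
        intro h; rw [h, zero_mul] at hn; exact one_ne_zero hn.symm
      refine hω ⟨(m : ℚ)/(n : ℚ), ?_⟩
      push_cast
      rw [div_eq_iff hn0, ← hm, mul_assoc, mul_comm a, hn, mul_one]
  have hsurj : Function.Surjective ((↑) : ℝ → UnitAddCircle) := fun x =>
    QuotientAddGroup.induction_on x fun r => ⟨r, rfl⟩
  have hcont : Continuous ((↑) : ℝ → UnitAddCircle) := continuous_quotient_mk'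
  have himg : Dense (((↑) : ℝ → UnitAddCircle) ''
      ((AddSubgroup.closure {1, ω} : AddSubgroup ℝ) : Set ℝ)) :=
    hsurj.denseRange.dense_image hcont hS
  have hsub : (((↑) : ℝ → UnitAddCircle) ''
      ((AddSubgroup.closure {1, ω} : AddSubgroup ℝ) : Set ℝ)) ⊆
      range fun n : ℤ => n • (ω : UnitAddCircle) := by
    rintro _ ⟨s, hs, rfl⟩
    induction hs using AddSubgroup.closure_induction with
    | mem x hx =>
        rcases hx with rfl | rfl
        · exact ⟨0, by show (0:ℤ) • ((ω:UnitAddCircle)) = _; rw [zero_smul]; exact (AddCircle.coe_period (p := (1:ℝ))).symm⟩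
        · exact ⟨1, one_zsmul _⟩
    | zero => exact ⟨0, by show (0:ℤ) • ((ω:UnitAddCircle)) = _; rw [zero_smul, QuotientAddGroup.mk_zero]⟩
    | add x y hx hy ihx ihy =>
        obtain ⟨nx, hnx⟩ := ihx; obtain ⟨ny, hny⟩ := ihy
        exact ⟨nx + ny, by show (nx + ny) • ((ω:UnitAddCircle)) = _; rw [QuotientAddGroup.mk_add, add_zsmul]; simp only [] at hnx hny; rw [hnx, hny]⟩
    | neg x hx ihx =>
        obtain ⟨nx, hnx⟩ := ihx
        exact ⟨-nx, by show (-nx) • ((ω:UnitAddCircle)) = _; rw [QuotientAddGroup.mk_neg, neg_zsmul]; simp only [] at hnx; rw [hnx]⟩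
  have hzd : Dense (range fun n : ℤ => n • (ω : UnitAddCircle)) := himg.mono hsub
  have : (range fun n : ℤ => θ₀ + n • (ω : UnitAddCircle)) =
      (fun x => θ₀ + x) '' (range fun n : ℤ => n • (ω : UnitAddCircle)) := by
    rw [← range_comp]; rfl
  rw [this]
  exact ((Homeomorph.addLeft θ₀).surjective.denseRange).dense_image
    (Homeomorph.addLeft θ₀).continuous hzd

/-- Let `T(θ,x) = (θ+ω, f(θ,x))` with `ω` irrational, `f` continuous
on `S¹ × [-2,2]` with values in `[-2,2]`, non-increasing on fibers, interchanging the
boundary circles. If there is a compact circular set `A ⊆ S¹ × [-1,1]` with connected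
fibers, strongly `T`-invariant, containing no arc of a curve, then `T` admits no
invariant curve. -/
theorem statement17 (ω : ℝ) (hω : Irrational ω)
    (f : UnitAddCircle → ℝ → ℝ)
    (hf : ContinuousOn (fun p : UnitAddCircle × ℝ => f p.1 p.2) (univ ×ˢ Icc (-2:ℝ) 2))
    (hmaps : ∀ θ, ∀ x ∈ Icc (-2:ℝ) 2, f θ x ∈ Icc (-2:ℝ) 2)
    (hmono : ∀ θ, ∀ x ∈ Icc (-2:ℝ) 2, ∀ y ∈ Icc (-2:ℝ) 2, x ≤ y → f θ y ≤ f θ x)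
    (hbd : ∀ θ, f θ (-2) = 2 ∧ f θ 2 = -2)
    (A : Set (UnitAddCircle × ℝ)) (hAΩ : A ⊆ univ ×ˢ Icc (-1:ℝ) 1)
    (hAc : IsCompact A) (hAcirc : Prod.fst '' A = univ)
    (hfib : ∀ θ : UnitAddCircle, IsPreconnected {x : ℝ | (θ, x) ∈ A})
    (hAinv : skewProd ω f '' A = A)
    (hnoarc : ¬ ∃ (U : Set UnitAddCircle) (ξ : UnitAddCircle → ℝ),
      IsOpen U ∧ U.Nonempty ∧ IsPreconnected U ∧ ContinuousOn ξ U ∧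
      (∀ θ ∈ U, ξ θ ∈ Icc (-2:ℝ) 2) ∧ graphOn U ξ ⊆ A) :
    ¬ ∃ φ : UnitAddCircle → ℝ, Continuous φ ∧ (∀ θ, φ θ ∈ Icc (-2:ℝ) 2) ∧
        ∀ θ, f θ (φ θ) = φ (θ + (ω : UnitAddCircle)) := by

  rintro ⟨φ, hφc, hφmem, hφinv⟩
  have hAclosed : IsClosed A := hAc.isClosed
  have hTmem : ∀ p ∈ A, skewProd ω f p ∈ A := fun p hp => by
    rw [← hAinv]; exact mem_image_of_mem _ hp
  have hfibne : ∀ θ : UnitAddCircle, ∃ x, (θ, x) ∈ A := by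
    intro θ
    have hθ : θ ∈ Prod.fst '' A := by rw [hAcirc]; trivial
    obtain ⟨⟨θ', x⟩, hp, rfl⟩ := hθ
    exact ⟨x, hp⟩
  have hord : ∀ θ, OrdConnected {x : ℝ | (θ, x) ∈ A} := fun θ =>
    isPreconnected_iff_ordConnected.mp (hfib θ)
  have hfibIcc : ∀ θ x, (θ, x) ∈ A → x ∈ Icc (-2:ℝ) 2 := by
    intro θ x hx
    have := (hAΩ hx).2
    exact ⟨by linarith [this.1], by linarith [this.2]⟩
  set ω' : UnitAddCircle := (ω : UnitAddCircle) with hω'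
  set C : Set UnitAddCircle := {θ | (θ, φ θ) ∈ A} with hC
  have hCclosed : IsClosed C := hAclosed.preimage (continuous_id.prodMk hφc)
  have hCfwd : ∀ θ ∈ C, θ + ω' ∈ C := by
    intro θ hθ
    have h2 := hTmem _ hθ
    simp only [skewProd] at h2
    rwa [hφinv θ] at h2
  by_cases hCne : C.Nonempty
  · -- C nonempty : C = univ, graph of φ is contained in A
    have hCcpt : IsCompact C := hCclosed.isCompact
    set Tn : ℕ → Set UnitAddCircle := fun n => (fun θ => θ + n • ω') '' C with hTn
    have hTmono : ∀ n, Tn (n + 1) ⊆ Tn n := by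
      rintro n _ ⟨θ, hθ, rfl⟩
      refine ⟨θ + ω', hCfwd θ hθ, ?_⟩
      show θ + ω' + n • ω' = θ + (n + 1) • ω'
      rw [succ_nsmul]; abel
    have hTcpt : ∀ n, IsCompact (Tn n) := fun n =>
      hCcpt.image (continuous_id.add continuous_const)
    have hTne : ∀ n, (Tn n).Nonempty := fun n => hCne.image _
    set K : Set UnitAddCircle := ⋂ n, Tn n with hK
    have hKne : K.Nonempty :=
      IsCompact.nonempty_iInter_of_sequence_nonempty_isCompact_isClosed Tn hTmono hTne
        (hTcpt 0) (fun n => (hTcpt n).isClosed)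
    have hbij : Function.Bijective (fun θ : UnitAddCircle => θ + ω') :=
      (Equiv.addRight ω').bijective
    have himgTn : ∀ n, (fun θ : UnitAddCircle => θ + ω') '' Tn n = Tn (n + 1) := by
      intro n
      have he : (fun x : UnitAddCircle => x + n • ω' + ω') = fun θ => θ + (n + 1) • ω' := by
        funext x; rw [succ_nsmul]; abel
      rw [hTn]
      rw [image_image, he]
    have hKshift : (fun θ : UnitAddCircle => θ + ω') '' K = K := by
      rw [hK, image_iInter hbij Tn]
      simp only [himgTn]
      apply Subset.antisymm
      · intro x hx
        rw [mem_iInter] at hx ⊢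
        intro n
        exact hTmono n (hx n)
      · intro x hx
        rw [mem_iInter] at hx ⊢
        intro n
        exact hx (n + 1)
    have hKfwd : ∀ θ ∈ K, θ + ω' ∈ K := fun θ hθ =>
      hKshift ▸ mem_image_of_mem _ hθ
    have hKbwd : ∀ θ ∈ K, θ - ω' ∈ K := by
      intro θ hθ
      rw [← hKshift] at hθ
      obtain ⟨θ', hθ', hh⟩ := hθ
      have : θ - ω' = θ' := by rw [← hh]; exact add_sub_cancel_right θ' ω'
      rwa [this]
    obtain ⟨θ₀, hθ₀⟩ := hKne
    have horb : ∀ n : ℤ, θ₀ + n • ω' ∈ K := by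
      intro n
      induction n using Int.induction_on with
      | zero => simpa using hθ₀
      | succ k ih =>
          have := hKfwd _ ih
          have he : θ₀ + (k:ℤ) • ω' + ω' = θ₀ + ((k:ℤ) + 1) • ω' := by
            rw [add_zsmul, one_zsmul]; abel
          rwa [he] at this
      | pred k ih =>
          have := hKbwd _ ih
          have he : θ₀ + (-(k:ℤ)) • ω' - ω' = θ₀ + (-(k:ℤ) - 1) • ω' := by
            rw [sub_zsmul, one_zsmul]; abel
          rwa [he] at this
    have hKdense : Dense K :=
      (denseOrbit ω hω θ₀).mono (by rintro _ ⟨n, rfl⟩; exact horb n)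
    have hKuniv : K = univ := by
      have hKcl : IsClosed K := isClosed_iInter fun n => (hTcpt n).isClosed
      rw [← hKcl.closure_eq, hKdense.closure_eq]
    have hCuniv : C = univ := by
      have hKC : K ⊆ C := by
        have : Tn 0 = C := by
          rw [hTn]; simp
        rw [hK]
        exact this ▸ iInter_subset Tn 0
      exact eq_univ_of_univ_subset (hKuniv ▸ hKC)
    exact hnoarc ⟨univ, φ, isOpen_univ, univ_nonempty, isPreconnected_univ,
      hφc.continuousOn, fun θ _ => hφmem θ, by
        rintro _ ⟨θ, -, rfl⟩
        have : θ ∈ C := hCuniv ▸ mem_univ θ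
        exact this⟩
  · -- C empty
    have hCemp : ∀ θ, (θ, φ θ) ∉ A := fun θ h => hCne ⟨θ, h⟩
    set K1 : Set UnitAddCircle := Prod.fst '' (A ∩ {p | φ p.1 ≤ p.2}) with hK1
    set K2 : Set UnitAddCircle := Prod.fst '' (A ∩ {p | p.2 ≤ φ p.1}) with hK2
    have hK1c : IsClosed K1 :=
      ((hAc.inter_right (isClosed_le (hφc.comp continuous_fst) continuous_snd)).image
        continuous_fst).isClosed
    have hK2c : IsClosed K2 :=
      ((hAc.inter_right (isClosed_le continuous_snd (hφc.comp continuous_fst))).image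
        continuous_fst).isClosed
    have hcover : ∀ θ, θ ∈ K1 ∪ K2 := by
      intro θ
      obtain ⟨x, hx⟩ := hfibne θ
      rcases le_total (φ θ) x with h | h
      · exact Or.inl ⟨(θ, x), ⟨hx, h⟩, rfl⟩
      · exact Or.inr ⟨(θ, x), ⟨hx, h⟩, rfl⟩
    have hdisj : ∀ θ, θ ∈ K1 → θ ∈ K2 → False := by
      intro θ h1 h2
      obtain ⟨p, ⟨hxA, hxle⟩, hp⟩ := h1
      obtain ⟨q, ⟨hyA, hyle⟩, hq⟩ := h2
      have hxA' : (θ, p.2) ∈ A := by rw [← hp]; exact hxA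
      have hxle' : φ θ ≤ p.2 := by rw [← hp]; exact hxle
      have hyA' : (θ, q.2) ∈ A := by rw [← hq]; exact hyA
      have hyle' : q.2 ≤ φ θ := by rw [← hq]; exact hyle
      exact hCemp θ ((hord θ).out hyA' hxA' ⟨hyle', hxle'⟩)
    have hdyn21 : ∀ θ, θ ∈ K2 → θ + ω' ∈ K1 := by
      intro θ h
      obtain ⟨p, ⟨hxA, hxle⟩, hp⟩ := h
      have hxA' : (θ, p.2) ∈ A := by rw [← hp]; exact hxA
      have hxle' : p.2 ≤ φ θ := by rw [← hp]; exact hxle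
      have hx2 : p.2 ∈ Icc (-2:ℝ) 2 := hfibIcc θ p.2 hxA'
      have hle : f θ (φ θ) ≤ f θ p.2 := hmono θ p.2 hx2 (φ θ) (hφmem θ) hxle'
      rw [hφinv θ] at hle
      exact ⟨(θ + ω', f θ p.2), ⟨hTmem _ hxA', hle⟩, rfl⟩
    have hdyn12 : ∀ θ, θ ∈ K1 → θ + ω' ∈ K2 := by
      intro θ h
      obtain ⟨p, ⟨hxA, hxle⟩, hp⟩ := h
      have hxA' : (θ, p.2) ∈ A := by rw [← hp]; exact hxA
      have hxle' : φ θ ≤ p.2 := by rw [← hp]; exact hxle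
      have hx2 : p.2 ∈ Icc (-2:ℝ) 2 := hfibIcc θ p.2 hxA'
      have hle : f θ p.2 ≤ f θ (φ θ) := hmono θ (φ θ) (hφmem θ) p.2 hx2 hxle'
      rw [hφinv θ] at hle
      exact ⟨(θ + ω', f θ p.2), ⟨hTmem _ hxA', hle⟩, rfl⟩
    have hK1ne : K1.Nonempty := by
      rcases hcover 0 with h | h
      · exact ⟨0, h⟩
      · exact ⟨0 + ω', hdyn21 0 h⟩
    have hK2ne : K2.Nonempty := by
      obtain ⟨θ, hθ⟩ := hK1ne
      exact ⟨θ + ω', hdyn12 θ hθ⟩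
    have hK1open : IsOpen K1 := by
      have : K1 = K2ᶜ := by
        apply Subset.antisymm
        · intro θ hθ h2
          exact hdisj θ hθ h2
        · intro θ hθ
          rcases hcover θ with h | h
          · exact h
          · exact absurd h hθ
      rw [this]
      exact hK2c.isOpen_compl
    rcases isClopen_iff.mp ⟨hK1c, hK1open⟩ with h | h
    · exact hK1ne.ne_empty h
    · obtain ⟨θ, hθ⟩ := hK2ne
      exact hdisj θ (h ▸ mem_univ θ) hθ
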